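/- Let T be a tournament on ℕ and let F ⊆ ℕ be a finite transitive extendable set. Then all but finitely many one point transitive extensions of F are extendable: the set of x ∉ F such that F ∪ {x} is transitive for T but F ∪ {x} is not extendable is finite. -/

import Mathlib

/-- `T` is a tournament on ℕ: irreflexive, and exactly one of `T x y`, `T y x`
holds for distinct `x`, `y`. -/
def IsTournament (T : ℕ → ℕ → Prop) : Prop :=
  (∀ x, ¬ T x x) ∧ ∀ x y, x ≠ y → (T x y ↔ ¬ T y x)

/-- `S` is transitive for the tournament `T`. -/
def TransitiveFor (T : ℕ → ℕ → Prop) (S : Set ℕ) : Prop :=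
  ∀ x ∈ S, ∀ y ∈ S, ∀ z ∈ S, T x y → T y z → T x z

/-- A set is extendable if it is contained in some infinite transitive set. -/
def Extendable (T : ℕ → ℕ → Prop) (F : Set ℕ) : Prop :=
  ∃ S : Set ℕ, S.Infinite ∧ TransitiveFor T S ∧ F ⊆ S

/- ## Auxiliary machinery: every infinite subset of a tournament contains an
infinite transitive subset (infinite Ramsey for pairs, tournament version). -/

open Classical in
/-- One step of the pre-Ramsey construction: remove the least element and keep
an infinite half determined by its relation to the rest. -/
noncomputable def stepSet (T : ℕ → ℕ → Prop) (D : Set ℕ) : Set ℕ :=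
  if {y ∈ D | y ≠ sInf D ∧ T (sInf D) y}.Infinite
  then {y ∈ D | y ≠ sInf D ∧ T (sInf D) y}
  else {y ∈ D | y ≠ sInf D ∧ ¬ T (sInf D) y}

noncomputable def seqSet (T : ℕ → ℕ → Prop) (C : Set ℕ) : ℕ → Set ℕ
  | 0 => C
  | n + 1 => stepSet T (seqSet T C n)

lemma stepSet_subset (T : ℕ → ℕ → Prop) (D : Set ℕ) :
    stepSet T D ⊆ {y ∈ D | y ≠ sInf D} := by
  unfold stepSet
  split <;> exact fun y hy => ⟨hy.1, hy.2.1⟩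

lemma stepSet_infinite (T : ℕ → ℕ → Prop) {D : Set ℕ} (hD : D.Infinite) :
    (stepSet T D).Infinite := by
  set a := sInf D
  have h1 : {y ∈ D | y ≠ a} = {y ∈ D | y ≠ a ∧ T a y} ∪ {y ∈ D | y ≠ a ∧ ¬ T a y} := by
    ext y
    simp only [Set.mem_setOf_eq, Set.mem_union]
    tauto
  have h2 : {y ∈ D | y ≠ a}.Infinite := by
    have := hD.diff (Set.finite_singleton a)
    refine this.mono fun y hy => ⟨hy.1, by simpa using hy.2⟩
  rw [h1] at h2
  rcases Set.infinite_union.mp h2 with h | h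
  · unfold stepSet
    rw [if_pos h]
    exact h
  · unfold stepSet
    split
    · assumption
    · rcases Set.infinite_union.mp h2 with h' | h'
      · exact absurd h' (by assumption)
      · exact h'

lemma stepSet_dichotomy (T : ℕ → ℕ → Prop) (D : Set ℕ) :
    (∀ y ∈ stepSet T D, T (sInf D) y) ∨ (∀ y ∈ stepSet T D, ¬ T (sInf D) y) := by
  unfold stepSet
  split
  · exact Or.inl fun y hy => hy.2.2
  · exact Or.inr fun y hy => hy.2.2

lemma seqSet_infinite (T : ℕ → ℕ → Prop) {C : Set ℕ} (hC : C.Infinite) :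
    ∀ n, (seqSet T C n).Infinite := by
  intro n
  induction n with
  | zero => exact hC
  | succ n ih => exact stepSet_infinite T ih

lemma seqSet_subset (T : ℕ → ℕ → Prop) (C : Set ℕ) :
    ∀ n, seqSet T C n ⊆ C := by
  intro n
  induction n with
  | zero => exact subset_rfl
  | succ n ih =>
      exact fun y hy => ih (stepSet_subset T (seqSet T C n) hy).1

lemma seqSet_chain (T : ℕ → ℕ → Prop) (C : Set ℕ) {m n : ℕ} (h : m < n) :
    seqSet T C n ⊆ seqSet T C (m + 1) := by
  induction n with
  | zero => omega
  | succ n ih =>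
      rcases Nat.lt_succ_iff_lt_or_eq.mp h with h' | h'
      · exact fun y hy => ih h' (stepSet_subset T (seqSet T C n) hy).1
      · rw [h']

/-- Transitivity from a strictly monotone chain. -/
lemma chain_transitive {T : ℕ → ℕ → Prop} (hT : IsTournament T)
    (a : ℕ → ℕ) (M : Set ℕ) (hinj : Set.InjOn a M)
    (hmono : ∀ m ∈ M, ∀ n ∈ M, m < n → T (a m) (a n)) :
    TransitiveFor T (a '' M) := by
  have key : ∀ m ∈ M, ∀ n ∈ M, T (a m) (a n) → m < n := by
    intro m hm n hn h
    rcases lt_trichotomy m n with h' | rfl | h'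
    · exact h'
    · exact absurd h (hT.1 _)
    · have h2 := hmono n hn m hm h'
      have hne : a m ≠ a n := fun e => h'.ne' (hinj hm hn e)
      exact absurd h2 ((hT.2 (a m) (a n) hne).mp h)
  rintro _ ⟨i, hi, rfl⟩ _ ⟨j, hj, rfl⟩ _ ⟨k, hk, rfl⟩ h1 h2
  exact hmono i hi k hk ((key i hi j hj h1).trans (key j hj k hk h2))

lemma isTournament_swap {T : ℕ → ℕ → Prop} (hT : IsTournament T) :
    IsTournament (Function.swap T) :=
  ⟨hT.1, fun x y hxy => hT.2 y x hxy.symm⟩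

lemma transitiveFor_swap {T : ℕ → ℕ → Prop} {S : Set ℕ}
    (h : TransitiveFor (Function.swap T) S) : TransitiveFor T S :=
  fun x hx y hy z hz hxy hyz => h z hz y hy x hx hyz hxy

/-- Every infinite set contains an infinite transitive subset. -/
lemma exists_infinite_transitive_subset {T : ℕ → ℕ → Prop} (hT : IsTournament T)
    {C : Set ℕ} (hC : C.Infinite) :
    ∃ X : Set ℕ, X ⊆ C ∧ X.Infinite ∧ TransitiveFor T X := by
  classical
  set s : ℕ → Set ℕ := seqSet T C with hs
  set a : ℕ → ℕ := fun n => sInf (s n) with ha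
  have hinf : ∀ n, (s n).Infinite := seqSet_infinite T hC
  have hmem : ∀ n, a n ∈ s n := fun n => Nat.sInf_mem (hinf n).nonempty
  have hnotmem : ∀ n, a n ∉ s (n + 1) := by
    intro n h
    exact (stepSet_subset T (s n) h).2 rfl
  have hchain : ∀ {m n : ℕ}, m < n → a n ∈ s (m + 1) := by
    intro m n h
    exact seqSet_chain T C h (hmem n)
  have hainj : Set.InjOn a (Set.univ : Set ℕ) := by
    intro m _ n _ hmn
    by_contra hne
    rcases Nat.lt_or_ge m n with h | h
    · exact hnotmem m (hmn ▸ hchain h)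
    · have h' : n < m := lt_of_le_of_ne h (Ne.symm hne)
      exact hnotmem n (hmn ▸ hchain h')
  -- color of each step
  set P : ℕ → Prop := fun n => ∀ y ∈ s (n + 1), T (a n) y with hP
  have hdich : ∀ n, P n ∨ ∀ y ∈ s (n + 1), ¬ T (a n) y := fun n => stepSet_dichotomy T (s n)
  -- pigeonhole on the color
  rcases Set.finite_or_infinite {n | P n} with hfin | hinfP
  · -- infinitely many "false" steps: use the swapped tournament
    have hM : {n | P n}ᶜ.Infinite := hfin.infinite_compl
    refine ⟨a '' {n | P n}ᶜ, ?_, hM.image (hainj.mono (Set.subset_univ _)), ?_⟩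
    · rintro _ ⟨n, _, rfl⟩
      exact seqSet_subset T C n (hmem n)
    · refine transitiveFor_swap (chain_transitive (isTournament_swap hT) a _
        (hainj.mono (Set.subset_univ _)) ?_)
      intro m hm n hn hmn
      have hQ : ∀ y ∈ s (m + 1), ¬ T (a m) y := (hdich m).resolve_left hm
      have h1 : ¬ T (a m) (a n) := hQ (a n) (hchain hmn)
      have hne : a n ≠ a m := fun e => hmn.ne' (hainj trivial trivial e)
      exact (hT.2 (a n) (a m) hne).mpr h1
  · refine ⟨a '' {n | P n}, ?_, hinfP.image (hainj.mono (Set.subset_univ _)), ?_⟩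
    · rintro _ ⟨n, _, rfl⟩
      exact seqSet_subset T C n (hmem n)
    · refine chain_transitive hT a _ (hainj.mono (Set.subset_univ _)) ?_
      intro m hm n hn hmn
      exact hm (a n) (hchain hmn)

/-- If `F` is a finite transitive extendable set, then all but finitely many of its
one point transitive extensions are extendable. -/
theorem cofinitely_many_extensions_extendable
    (T : ℕ → ℕ → Prop) (hT : IsTournament T) (F : Finset ℕ)
    (hFtrans : TransitiveFor T ↑F) (hFext : Extendable T ↑F) :
    {x | x ∉ F ∧ TransitiveFor T (insert x ↑F) ∧
      ¬ Extendable T (insert x ↑F)}.Finite := by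
  classical
  by_contra hB
  set B := {x | x ∉ F ∧ TransitiveFor T (insert x ↑F) ∧
      ¬ Extendable T (insert x ↑F)} with hBdef
  have hBinf : B.Infinite := hB
  -- pigeonhole on the relation pattern towards F
  set p : ℕ → ({f // f ∈ F} → Bool) := fun x f => decide (T f.1 x) with hp
  have hfiber : ∃ v, {x ∈ B | p x = v}.Infinite := by
    by_contra h
    push_neg at h
    have hsub : B ⊆ ⋃ v : {f // f ∈ F} → Bool, {x ∈ B | p x = v} :=
      fun x hx => Set.mem_iUnion.mpr ⟨p x, hx, rfl⟩
    exact hBinf ((Set.finite_iUnion fun v => h v).subset hsub)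
  obtain ⟨v, hCinf⟩ := hfiber
  set C := {x ∈ B | p x = v} with hCdef
  obtain ⟨X, hXC, hXinf, hXtrans⟩ := exists_infinite_transitive_subset hT hCinf
  obtain ⟨x₀, hx₀⟩ := hXinf.nonempty
  have hXB : ∀ u ∈ X, u ∈ B := fun u hu => (hXC hu).1
  have hXF : ∀ u ∈ X, u ∉ F := fun u hu => (hXB u hu).1
  have hXins : ∀ u ∈ X, TransitiveFor T (insert u ↑F) := fun u hu => (hXB u hu).2.1
  -- same pattern on X
  have hpat : ∀ u ∈ X, ∀ w ∈ X, ∀ f ∈ F, (T f u ↔ T f w) := by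
    intro u hu w hw f hf
    have h1 : p u = v := (hXC hu).2
    have h2 : p w = v := (hXC hw).2
    have := congrFun (h1.trans h2.symm) ⟨f, hf⟩
    simpa [hp] using this
  -- the big transitive set
  have hbig : TransitiveFor T (↑F ∪ X) := by
    intro x hx y hy z hz hxy hyz
    have memins : ∀ u, u ∈ X → ∀ w, w ∈ (↑F : Set ℕ) → w ∈ insert u (↑F : Set ℕ) :=
      fun u _ w hw => Set.mem_insert_of_mem _ hw
    rcases hx with hx | hx <;> rcases hy with hy | hy <;> rcases hz with hz | hz
    · exact hFtrans x hx y hy z hz hxy hyz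
    · -- x,y ∈ F, z ∈ X
      exact hXins z hz x (memins z hz x hx) y (memins z hz y hy) z (Set.mem_insert z _) hxy hyz
    · -- x ∈ F, y ∈ X, z ∈ F
      exact hXins y hy x (memins y hy x hx) y (Set.mem_insert y _) z (memins y hy z hz) hxy hyz
    · -- x ∈ F, y,z ∈ X : T x y ↔ T x z
      exact (hpat y hy z hz x hx).mp hxy
    · -- x ∈ X, y,z ∈ F
      exact hXins x hx x (Set.mem_insert x _) y (memins x hx y hy) z (memins x hx z hz) hxy hyz
    · -- x ∈ X, y ∈ F, z ∈ X : contradiction from pattern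
      have h1 : T y x := (hpat z hz x hx y hy).mp hyz
      have hne : x ≠ y := fun e => hXF x hx (e ▸ hy)
      exact absurd h1 ((hT.2 x y hne).mp hxy)
    · -- x,y ∈ X, z ∈ F
      have hne : y ≠ z := fun e => hXF y hy (e ▸ hz)
      have h1 : ¬ T z y := ((hT.2 y z hne).mp hyz)
      have h2 : ¬ T z x := fun h => h1 ((hpat x hx y hy z hz).mp h)
      have hne2 : x ≠ z := fun e => hXF x hx (e ▸ hz)
      exact (hT.2 x z hne2).mpr h2
    · exact hXtrans x hx y hy z hz hxy hyz
  -- x₀'s one point extension is extendable after all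
  have : Extendable T (insert x₀ ↑F) := by
    refine ⟨↑F ∪ X, hXinf.mono Set.subset_union_right, hbig, ?_⟩
    intro w hw
    rcases hw with rfl | hw
    · exact Or.inr hx₀
    · exact Or.inl hw
  exact (hXB x₀ hx₀).2.2 this
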